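/- Let Z be a metric space, let X, Y ⊆ Z, x ∈ X, y ∈ Y and ε > 0. Assume d(x,y) ≤ ε, that every point of B_X(x,1/ε) is within distance < ε of some point of Y, and that every point of B_Y(y,1/ε) is within distance < ε of some point of X. Suppose that for some r, s > 0, c ∈ (0,1) and n ∈ ℕ one has dim_N(B_Y(y,r),c,s) ≤ n. Then, for every r' ≤ min{1/ε, r − 2ε}, setting c' = (cs − 2ε)/(s + 2ε) and s' = s + 2ε, one has dim_N(B_X(x,r'),c',s') ≤ n. -/
import Mathlib


open Metric Set

/-- The set `A` in a space with distance function `d` has Nagata dimension at most `n`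
with constant `c` at scale `s` (written `dim_N(A,c,s) ≤ n` in the paper): there is a
cover `𝒰 = ⋃_{k=0}^n 𝒰 k` of `A` by subsets of `A`, each member having diameter at
most `s`, such that each family `𝒰 k` is `c*s`-separated. -/
def dimNle {X : Type*} (d : X → X → ℝ) (A : Set X) (c s : ℝ) (n : ℕ) : Prop :=
  ∃ 𝒰 : Fin (n + 1) → Set (Set X),
    (∀ k, ∀ U ∈ 𝒰 k, U ⊆ A) ∧
    (∀ p ∈ A, ∃ k, ∃ U ∈ 𝒰 k, p ∈ U) ∧
    (∀ k, ∀ U ∈ 𝒰 k, ∀ a ∈ U, ∀ b ∈ U, d a b ≤ s) ∧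
    (∀ k, ∀ U ∈ 𝒰 k, ∀ V ∈ 𝒰 k, U ≠ V → ∀ a ∈ U, ∀ b ∈ V, c * s ≤ d a b)

/-- `dimAle d A C Rbar β` (written `dim_A(A,C,Rbar) ≤ β` in the paper): for all
`0 < r < R < Rbar` and every `x ∈ A`, the ball of radius `R` around `x` in `A` can be
covered by at most `C * (R/r)^β` balls of radius `r` with centers in `A`. -/
def dimAle {X : Type*} (d : X → X → ℝ) (A : Set X) (C Rbar β : ℝ) : Prop :=
  ∀ r R : ℝ, 0 < r → r < R → R < Rbar → ∀ x ∈ A,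
    ∃ T : Finset X, ↑T ⊆ A ∧ (T.card : ℝ) ≤ C * (R / r) ^ β ∧
      ∀ z ∈ A, d z x < R → ∃ t ∈ T, d z t < r

/-- `d` is a metric distance function on `Y`: symmetric, triangle inequality, and
vanishing exactly on the diagonal. -/
def IsMetricDist {Y : Type*} (d : Y → Y → ℝ) : Prop :=
  (∀ a b, d a b = d b a) ∧ (∀ a b c, d a c ≤ d a b + d b c) ∧ (∀ a b, d a b = 0 ↔ a = b)

/-- An `ε`-coupling between the pointed spaces `(A, dA, a₀)` and `(B, dB, b₀)`:
a pseudometric on the disjoint union extending `dA` and `dB`, with `d(a₀,b₀) ≤ ε`,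
every point of `B_A(a₀,1/ε)` within distance `< ε` of a point of `B`, and every point
of `B_B(b₀,1/ε)` within distance `< ε` of a point of `A`. -/
def IsCoupling {A B : Type*} (dA : A → A → ℝ) (dB : B → B → ℝ) (a₀ : A) (b₀ : B)
    (ε : ℝ) (d : A ⊕ B → A ⊕ B → ℝ) : Prop :=
  (∀ p q, d p q = d q p) ∧
  (∀ p, d p p = 0) ∧
  (∀ p q r, d p r ≤ d p q + d q r) ∧
  (∀ u v : A, d (Sum.inl u) (Sum.inl v) = dA u v) ∧
  (∀ u v : B, d (Sum.inr u) (Sum.inr v) = dB u v) ∧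
  d (Sum.inl a₀) (Sum.inr b₀) ≤ ε ∧
  (∀ u : A, dA u a₀ < 1 / ε → ∃ v : B, d (Sum.inl u) (Sum.inr v) < ε) ∧
  (∀ v : B, dB v b₀ < 1 / ε → ∃ u : A, d (Sum.inl u) (Sum.inr v) < ε)

/-- If `(X,x)` and `(Y,y)` are at Gromov–Hausdorff distance at most `ε`
inside `Z` and `dim_N(B_Y(y,r),c,s) ≤ n`, then for every `r' ≤ min{1/ε, r − 2ε}` one has
`dim_N(B_X(x,r'), (cs − 2ε)/(s + 2ε), s + 2ε) ≤ n`. -/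
theorem nagata_transfer_for_tangents {Z : Type*} [MetricSpace Z] (X Y : Set Z)
    (x y : Z) (hx : x ∈ X) (hy : y ∈ Y) (ε : ℝ) (hε : 0 < ε)
    (hxy : dist x y ≤ ε)
    (hXY : ∀ a ∈ X, dist a x < 1 / ε → ∃ b ∈ Y, dist a b < ε)
    (hYX : ∀ b ∈ Y, dist b y < 1 / ε → ∃ a ∈ X, dist b a < ε)
    (r s c : ℝ) (n : ℕ) (hr : 0 < r) (hs : 0 < s) (hc : c ∈ Set.Ioo (0:ℝ) 1)
    (hdim : dimNle (fun a b : Z => dist a b) (Y ∩ Metric.ball y r) c s n) :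
    ∀ r' : ℝ, r' ≤ min (1 / ε) (r - 2 * ε) →
      dimNle (fun a b : Z => dist a b) (X ∩ Metric.ball x r')
        ((c * s - 2 * ε) / (s + 2 * ε)) (s + 2 * ε) n := by
  intro r' hr'
  obtain ⟨𝒰, hsub, hcov, hdiam, hsep⟩ := hdim
  have hs2 : (0:ℝ) < s + 2 * ε := by linarith
  refine ⟨fun k => (fun U => {a | a ∈ X ∩ Metric.ball x r' ∧ ∃ b ∈ U, dist a b < ε}) '' 𝒰 k, ?_, ?_, ?_, ?_⟩
  · rintro k V ⟨U, hU, rfl⟩ a ⟨ha, _⟩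
    exact ha
  · rintro p ⟨hpX, hpb⟩
    have hpx : dist p x < r' := Metric.mem_ball.mp hpb
    obtain ⟨b, hbY, hpbd⟩ := hXY p hpX (lt_of_lt_of_le hpx (hr'.trans (min_le_left _ _)))
    have hby : dist b y < r := by
      have := hr'.trans (min_le_right _ _)
      calc dist b y ≤ dist b p + dist p x + dist x y := dist_triangle4 b p x y
        _ < ε + r' + ε := by rw [dist_comm b p]; linarith
        _ ≤ r := by linarith
    obtain ⟨k, U, hU, hbU⟩ := hcov b ⟨hbY, Metric.mem_ball.mpr hby⟩
    exact ⟨k, _, ⟨U, hU, rfl⟩, ⟨hpX, hpb⟩, b, hbU, hpbd⟩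
  · rintro k V ⟨U, hU, rfl⟩ a ⟨_, b, hbU, hab⟩ a' ⟨_, b', hbU', hab'⟩
    have hbb' : dist b b' ≤ s := hdiam k U hU b hbU b' hbU'
    calc dist a a' ≤ dist a b + dist b b' + dist b' a' := dist_triangle4 a b b' a'
      _ ≤ s + 2 * ε := by rw [dist_comm b' a']; linarith
  · rintro k V ⟨U, hU, rfl⟩ W ⟨U', hU', rfl⟩ hne a ⟨_, b, hbU, hab⟩ a' ⟨_, b', hbU', hab'⟩
    have hUne : U ≠ U' := by rintro rfl; exact hne rfl
    have hbb' : c * s ≤ dist b b' := hsep k U hU U' hU' hUne b hbU b' hbU'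
    have : (c * s - 2 * ε) / (s + 2 * ε) * (s + 2 * ε) = c * s - 2 * ε :=
      div_mul_cancel₀ _ hs2.ne'
    rw [this]
    calc c * s - 2 * ε ≤ dist b b' - dist b a - dist b' a' := by
          rw [dist_comm b a, dist_comm b' a']; linarith
      _ ≤ dist a a' := by
          have := dist_triangle4 b a a' b'
          have h2 := dist_triangle b a' b'  -- unused
          nlinarith [dist_triangle b a a', dist_triangle a a' b', dist_comm a' b', dist_triangle4 b a a' b']
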